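/- Let I(H) be the inclusion ideal of a uniformly increasing hypergraph H on n vertices with containment vector a = (a_1,...,a_n) (ordered so that a_1 ≥ a_2 ≥ ... ≥ a_n), and let I^{[*]}(H) be its special dual. Then the ideal (I^{[*]}(H))_{≥t} is stable, where t = a_2 + a_3 + ... + a_n. -/
import Mathlib


open MvPolynomial

noncomputable section

/-- The containment vector of a hypergraph with edges `E`: `a j` is the number of
edges containing the vertex `j`. -/
def contVec {n s : ℕ} (E : Fin s → Finset (Fin n)) (j : Fin n) : ℕ :=
  (Finset.univ.filter fun i : Fin s => j ∈ E i).card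

/-- The exponent vector `b_i` of the `i`-th minimal generator
`x^{b_i} = ∏_{x ∈ E_i} x^{s-i+1}` of the inclusion ideal (here `i : Fin s` is
zero-based, so the exponent is `s - i`). -/
def expVec {n s : ℕ} (E : Fin s → Finset (Fin n)) (i : Fin s) : Fin n →₀ ℕ :=
  Finsupp.ofSupportFinite (fun j => if j ∈ E i then s - i.val else 0) (Set.toFinite _)

/-- The inclusion ideal `I(H)` of a uniformly increasing hypergraph. -/
def inclIdeal (K : Type*) [Field K] {n s : ℕ} (E : Fin s → Finset (Fin n)) :
    Ideal (MvPolynomial (Fin n) K) :=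
  Ideal.span (Set.range fun i : Fin s => monomial (expVec E i) (1 : K))

/-- The special dual `I^{[*]}(H) = ⋂_i m^{a∖b_i}`: the Alexander dual of the inclusion
ideal with respect to the containment vector `a`. -/
def specialDual (K : Type*) [Field K] {n s : ℕ} (E : Fin s → Finset (Fin n)) :
    Ideal (MvPolynomial (Fin n) K) :=
  ⨅ i : Fin s, Ideal.span
    ((fun j => (X j : MvPolynomial (Fin n) K) ^ (contVec E j + 1 - expVec E i j)) ''
      (E i : Set (Fin n)))



/-- The ideal generated by all monomials of `I` of total degree at least `t`. -/
def trunc {K : Type*} [Field K] {n : ℕ} (I : Ideal (MvPolynomial (Fin n) K)) (t : ℕ) :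
    Ideal (MvPolynomial (Fin n) K) :=
  Ideal.span { p | ∃ v : Fin n →₀ ℕ, p = monomial v (1 : K) ∧ p ∈ I ∧ t ≤ v.sum fun _ e => e }

/-- A monomial ideal `J` is stable if for every monomial `x^v ∈ J` and every `j < m(v)`,
where `m(v)` is the largest index of a variable dividing `x^v`, the monomial
`x_j · x^v / x_{m(v)}` also lies in `J`. -/
def IsStable {K : Type*} [Field K] {n : ℕ} (J : Ideal (MvPolynomial (Fin n) K)) : Prop :=
  ∀ v : Fin n →₀ ℕ, monomial v (1 : K) ∈ J →
    ∀ m : Fin n, m ∈ v.support → (∀ i ∈ v.support, i ≤ m) →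
      ∀ j : Fin n, j < m →
        monomial (v - Finsupp.single m 1 + Finsupp.single j 1) (1 : K) ∈ J

lemma mem_span_pow_iff {K : Type*} [Field K] {n : ℕ} (v : Fin n →₀ ℕ) (e : Fin n → ℕ)
    (S : Set (Fin n)) :
    monomial v (1 : K) ∈ Ideal.span ((fun j => (X j : MvPolynomial (Fin n) K) ^ e j) '' S)
      ↔ ∃ j ∈ S, e j ≤ v j := by
  have himg : (fun j => (X j : MvPolynomial (Fin n) K) ^ e j) '' S
      = (fun w => monomial w (1 : K)) '' ((fun j => Finsupp.single j (e j)) '' S) := by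
    rw [Set.image_image]
    apply Set.image_congr'
    intro j
    rw [X_pow_eq_monomial]
  rw [himg, mem_ideal_span_monomial_image]
  simp [support_monomial, Finsupp.single_le_iff]

lemma mem_edge_iff {n s : ℕ} {E : Fin s → Finset (Fin n)} (hmono : Monotone E)
    (i : Fin s) (j : Fin n) : j ∈ E i ↔ s - i.val ≤ contVec E j := by
  constructor
  · intro hj
    have hsub : Finset.Ici i ⊆ Finset.univ.filter fun i' : Fin s => j ∈ E i' := by
      intro x hx
      simp only [Finset.mem_filter, Finset.mem_univ, true_and]
      exact hmono (Finset.mem_Ici.mp hx) hj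
    have := Finset.card_le_card hsub
    rwa [Fin.card_Ici] at this
  · intro hle
    by_contra hj
    have hsub : (Finset.univ.filter fun i' : Fin s => j ∈ E i') ⊆ Finset.Ioi i := by
      intro x hx
      simp only [Finset.mem_filter, Finset.mem_univ, true_and] at hx
      rw [Finset.mem_Ioi]
      by_contra hxi
      exact hj (hmono (not_lt.mp hxi) hx)
    have := Finset.card_le_card hsub
    rw [Fin.card_Ioi] at this
    have hi := i.isLt
    unfold contVec at hle
    omega

lemma mem_trunc_iff {K : Type*} [Field K] {n : ℕ} (I : Ideal (MvPolynomial (Fin n) K))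
    (t : ℕ) (v : Fin n →₀ ℕ) :
    monomial v (1 : K) ∈ trunc I t ↔
      ∃ w : Fin n →₀ ℕ, w ≤ v ∧ monomial w (1 : K) ∈ I ∧ t ≤ w.sum fun _ e => e := by
  have hset : { p | ∃ u : Fin n →₀ ℕ, p = monomial u (1 : K) ∧ p ∈ I ∧ t ≤ u.sum fun _ e => e }
      = (fun u => monomial u (1 : K)) ''
        { u : Fin n →₀ ℕ | monomial u (1 : K) ∈ I ∧ t ≤ u.sum fun _ e => e } := by
    ext p
    simp only [Set.mem_setOf_eq, Set.mem_image]
    constructor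
    · rintro ⟨u, rfl, h1, h2⟩; exact ⟨u, ⟨h1, h2⟩, rfl⟩
    · rintro ⟨u, ⟨h1, h2⟩, rfl⟩; exact ⟨u, rfl, h1, h2⟩
  have hsupp : ∀ u : Fin n →₀ ℕ, ((monomial u (1 : K)).support) = {u} := by
    intro u; classical
    rw [support_monomial, if_neg one_ne_zero]
  rw [trunc, hset, mem_ideal_span_monomial_image]
  simp only [hsupp, Finset.mem_singleton, Set.mem_setOf_eq]
  constructor
  · intro h
    obtain ⟨w, ⟨h1, h2⟩, h3⟩ := h v rfl
    exact ⟨w, h3, h1, h2⟩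
  · rintro ⟨w, h3, h1, h2⟩ xi hxi
    subst hxi
    exact ⟨w, ⟨h1, h2⟩, h3⟩
/-- For the special dual `I^{[*]}(H)` of the inclusion ideal of a
uniformly increasing hypergraph with containment vector `a` (ordered decreasingly,
which holds when vertices are ordered so that each edge is an initial segment and
`E_s = X`), the ideal `(I^{[*]}(H))_{≥t}` is stable, where `t = a_2 + ⋯ + a_n`. -/
theorem stmt11 {K : Type*} [Field K]
    {n s d : ℕ} (E : Fin s → Finset (Fin n)) (hs : 0 < s) (hd : 1 ≤ d)
    (hmono : Monotone E) (hcard1 : 2 ≤ (E ⟨0, hs⟩).card)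
    (hstep : ∀ i : Fin s, ∀ h : i.val + 1 < s, (E ⟨i.val + 1, h⟩).card = (E i).card + d)
    (hn : 0 < n)
    (hinit : ∀ i : Fin s, ∀ j k : Fin n, j ≤ k → k ∈ E i → j ∈ E i)
    (hlast : E ⟨s - 1, by omega⟩ = Finset.univ) :
    IsStable (trunc (specialDual K E)
      (∑ j ∈ Finset.univ.erase (⟨0, hn⟩ : Fin n), contVec E j)) := by
  classical
  set a : Fin n → ℕ := contVec E with ha
  have hedge : ∀ i : Fin s, ∀ j : Fin n, j ∈ E i ↔ s - i.val ≤ a j :=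
    fun i j => mem_edge_iff hmono i j
  have amono : ∀ j k : Fin n, j ≤ k → a k ≤ a j := by
    intro j k hjk
    apply Finset.card_le_card
    intro i hi
    simp only [Finset.mem_filter, Finset.mem_univ, true_and] at hi ⊢
    exact hinit i j k hjk hi
  have apos : ∀ k : Fin n, 1 ≤ a k := by
    intro k
    have hk : k ∈ E ⟨s - 1, by omega⟩ := by rw [hlast]; exact Finset.mem_univ k
    have := (hedge ⟨s - 1, by omega⟩ k).mp hk
    simp only at this
    omega
  have hE0 : ∀ i : Fin s, (⟨0, hn⟩ : Fin n) ∈ E i := by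
    intro i
    have hle : (⟨0, hs⟩ : Fin s) ≤ i := by
      rw [Fin.le_def]; exact Nat.zero_le _
    have hcard := Finset.card_le_card (hmono hle)
    obtain ⟨k, hk⟩ := Finset.card_pos.mp (by omega : 0 < (E i).card)
    exact hinit i _ k (by rw [Fin.le_def]; exact Nat.zero_le _) hk
  have a0 : a ⟨0, hn⟩ = s := by
    have hfil : (Finset.univ.filter fun i : Fin s => (⟨0, hn⟩ : Fin n) ∈ E i)
        = Finset.univ := Finset.filter_true_of_mem fun i _ => hE0 i
    rw [ha]
    unfold contVec
    rw [hfil, Finset.card_univ, Fintype.card_fin]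
  have hcards : ∀ t : ℕ, ∀ ht : t < s, t + 2 ≤ (E ⟨t, ht⟩).card := by
    intro t
    induction t with
    | zero => intro ht; exact hcard1
    | succ u ih =>
      intro ht
      have hu : u < s := by omega
      have h2 : (E ⟨u + 1, ht⟩).card = (E ⟨u, hu⟩).card + d := hstep ⟨u, hu⟩ ht
      have h3 := ih hu
      rw [h2]
      omega
  have hns : s + 1 ≤ n := by
    have h1 : s - 1 + 2 ≤ (Finset.univ : Finset (Fin n)).card := by
      rw [← hlast]
      exact hcards (s - 1) (by omega)
    rw [Finset.card_univ, Fintype.card_fin] at h1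
    omega
  have hdual : ∀ v : Fin n →₀ ℕ, monomial v (1 : K) ∈ specialDual K E ↔
      ∀ i : Fin s, ∃ k : Fin n, s - i.val ≤ a k ∧ a k + 1 - (s - i.val) ≤ v k := by
    intro v
    rw [specialDual, Submodule.mem_iInf]
    apply forall_congr'
    intro i
    rw [mem_span_pow_iff]
    constructor
    · rintro ⟨k, hkE, hk⟩
      rw [Finset.mem_coe] at hkE
      have hk' : expVec E i k = s - i.val := by
        show (Finsupp.ofSupportFinite _ _) k = _
        rw [Finsupp.ofSupportFinite_coe]
        exact if_pos hkE
      refine ⟨k, (hedge i k).mp hkE, ?_⟩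
      rwa [ha, ← hk']
    · rintro ⟨k, hak, hk⟩
      have hkE : k ∈ E i := (hedge i k).mpr hak
      have hk' : expVec E i k = s - i.val := by
        show (Finsupp.ofSupportFinite _ _) k = _
        rw [Finsupp.ofSupportFinite_coe]
        exact if_pos hkE
      exact ⟨k, Finset.mem_coe.mpr hkE, by rw [hk']; exact hk⟩
  intro v hv m hm hmax j hjm
  rw [mem_trunc_iff] at hv ⊢
  obtain ⟨w, hwv, hwD, hwt⟩ := hv
  have hwle : ∀ k, w k ≤ v k := fun k => Finsupp.le_def.mp hwv k
  have hcondv : ∀ i : Fin s, ∃ k : Fin n, s - i.val ≤ a k ∧ a k + 1 - (s - i.val) ≤ v k := by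
    intro i
    obtain ⟨k, h1, h2⟩ := (hdual w).mp hwD i
    exact ⟨k, h1, le_trans h2 (hwle k)⟩
  have hsum_fin : ∀ u : Fin n →₀ ℕ, (u.sum fun _ e => e) = ∑ k, u k :=
    fun u => Finsupp.sum_fintype u _ fun _ => rfl
  have hTv : (∑ j ∈ Finset.univ.erase (⟨0, hn⟩ : Fin n), a j) ≤ ∑ k, v k := by
    rw [hsum_fin] at hwt
    exact le_trans hwt (Finset.sum_le_sum fun k _ => hwle k)
  have hvm1 : 1 ≤ v m := Nat.one_le_iff_ne_zero.mpr (Finsupp.mem_support_iff.mp hm)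
  have hv' : ∀ k, ((v - Finsupp.single m 1 + Finsupp.single j 1 : Fin n →₀ ℕ)) k
      = v k - (if m = k then 1 else 0) + (if j = k then 1 else 0) := by
    intro k
    rw [Finsupp.add_apply, Finsupp.tsub_apply, Finsupp.single_apply, Finsupp.single_apply]
  have hmj : ¬ (m = j) := (ne_of_lt hjm).symm
  have hjm' : ¬ (j = m) := ne_of_lt hjm
  refine ⟨v - Finsupp.single m 1 + Finsupp.single j 1, le_refl _, ?_, ?_⟩
  · -- membership in the special dual
    rw [hdual]
    intro i
    set c := s - i.val with hc
    have hc1 : 1 ≤ c := by have := i.isLt; omega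
    obtain ⟨k0, hk0a, hk0v⟩ := hcondv i
    by_cases hex : ∃ k : Fin n, k ≠ m ∧ c ≤ a k ∧ a k + 1 - c ≤ v k
    · obtain ⟨k, hkm, h1, h2⟩ := hex
      refine ⟨k, h1, ?_⟩
      rw [hv' k, if_neg (fun h => hkm h.symm)]
      split <;> omega
    · push_neg at hex
      have hk0m : k0 = m := by
        by_contra hne
        have := hex k0 hne hk0a
        omega
      rw [hk0m] at hk0a hk0v
      by_cases hbig : a m + 2 ≤ v m + c
      · refine ⟨m, hk0a, ?_⟩
        rw [hv' m, if_pos rfl, if_neg hjm']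
        omega
      · have hvmc : v m + c = a m + 1 := by omega
        have hcaj : c ≤ a j := le_trans hk0a (amono j m (le_of_lt hjm))
        have hkey : a j ≤ v j + c := by
          by_contra hcon
          push_neg at hcon
          set S1 := (Finset.univ.filter fun k : Fin n => k < m).erase j with hS1
          have hjmem : j ∈ Finset.univ.filter fun k : Fin n => k < m := by
            simp [hjm]
          have hfil : (Finset.univ.filter fun k : Fin n => k < m) = Finset.Iio m := by
            ext x; simp
          have hS1card : S1.card = m.val - 1 := by
            rw [hS1, Finset.card_erase_of_mem hjmem, hfil, Fin.card_Iio]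
          have hpt : ∀ k ∈ S1, v k + c ≤ a k := by
            intro k hk
            have hk1 : k ∈ Finset.univ.filter fun k : Fin n => k < m :=
              Finset.mem_of_mem_erase hk
            rw [Finset.mem_filter] at hk1
            have hklt : k < m := hk1.2
            have hca : c ≤ a k := le_trans hk0a (amono k m (le_of_lt hklt))
            have := hex k (ne_of_lt hklt) hca
            omega
          have hsum1 : (∑ k ∈ S1, v k) + S1.card * c ≤ ∑ k ∈ S1, a k := by
            have h := Finset.sum_le_sum hpt
            rw [Finset.sum_add_distrib, Finset.sum_const, smul_eq_mul] at h
            exact h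
          rw [hS1card] at hsum1
          have hsplit : ∀ f : Fin n → ℕ, ∑ k, f k
              = (f m + (f j + ∑ k ∈ S1, f k))
                + ∑ k ∈ Finset.univ.filter (fun k : Fin n => m < k), f k := by
            intro f
            rw [← Finset.sum_filter_add_sum_filter_not Finset.univ (fun k : Fin n => k ≤ m) f]
            congr 1
            · have h1 : Finset.univ.filter (fun k : Fin n => k ≤ m)
                  = insert m (Finset.univ.filter fun k : Fin n => k < m) := by
                ext x
                simp only [Finset.mem_filter, Finset.mem_univ, true_and, Finset.mem_insert]
                constructor
                · intro h; rcases eq_or_lt_of_le h with h | h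
                  · exact Or.inl h
                  · exact Or.inr (by simpa using h)
                · rintro (rfl | h)
                  · exact le_refl _
                  · exact le_of_lt h
              rw [h1, Finset.sum_insert (by simp)]
              congr 1
              rw [hS1, Finset.add_sum_erase _ f hjmem]
            · apply Finset.sum_congr _ fun _ _ => rfl
              ext x
              simp [not_le]
          have htail0 : ∑ k ∈ Finset.univ.filter (fun k : Fin n => m < k), v k = 0 := by
            apply Finset.sum_eq_zero
            intro k hk
            rw [Finset.mem_filter] at hk
            by_contra hne
            have hks : k ∈ v.support := Finsupp.mem_support_iff.mpr hne
            have := hmax k hks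
            exact absurd hk.2 (not_lt.mpr this)
          have htailc : n - 1 - m.val ≤
              ∑ k ∈ Finset.univ.filter (fun k : Fin n => m < k), a k := by
            have hfil2 : (Finset.univ.filter fun k : Fin n => m < k) = Finset.Ioi m := by
              ext x; simp
            have h := Finset.card_nsmul_le_sum
              (Finset.univ.filter fun k : Fin n => m < k) a 1 fun x _ => apos x
            rw [smul_eq_mul, mul_one] at h
            rw [hfil2, Fin.card_Ioi] at h
            rwa [hfil2]
          have hT0 : a ⟨0, hn⟩ + (∑ j ∈ Finset.univ.erase (⟨0, hn⟩ : Fin n), a j)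
              = ∑ k, a k := Finset.add_sum_erase _ a (Finset.mem_univ _)
          have hsplitv := hsplit v
          have hsplita := hsplit a
          have hM1 : 1 ≤ m.val := by
            have := hjm
            rw [Fin.lt_def] at this
            omega
          have hMn : m.val < n := m.isLt
          obtain ⟨X, Y, hX1, hX2, hX3, hX4⟩ :
              ∃ X Y : ℕ, X = (m.val - 1) * c ∧ Y = (m.val + 1) * c
                ∧ Y = X + c + c ∧ m.val + 1 ≤ Y := by
            refine ⟨(m.val - 1) * c, (m.val + 1) * c, rfl, rfl, ?_, ?_⟩
            · have h1 : m.val + 1 = (m.val - 1) + 2 := by omega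
              rw [h1, add_mul]
              ring
            · exact Nat.le_mul_of_pos_right _ hc1
          rw [← hX1] at hsum1
          omega
        refine ⟨j, hcaj, ?_⟩
        rw [hv' j, if_neg hmj, if_pos rfl]
        omega
  · -- the degree is unchanged
    rw [hsum_fin]
    have hstep1 : ∑ k, ((v - Finsupp.single m 1 + Finsupp.single j 1 : Fin n →₀ ℕ)) k
        = ∑ k, (v k - (if m = k then 1 else 0) + (if j = k then 1 else 0)) :=
      Finset.sum_congr rfl fun k _ => hv' k
    have hstep2 : ∑ k : Fin n, (v k - (if m = k then 1 else 0) + (if j = k then 1 else 0))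
        = (∑ k : Fin n, (v k - if m = k then 1 else 0))
          + ∑ k : Fin n, (if j = k then 1 else 0) := Finset.sum_add_distrib
    have hstep3 : (∑ k : Fin n, if j = k then 1 else 0) = 1 := by
      rw [Finset.sum_ite_eq]
      simp
    have hstep4 : (∑ k : Fin n, (v k - if m = k then 1 else 0))
        = (v m - 1) + ∑ k ∈ Finset.univ.erase m, v k := by
      rw [← Finset.add_sum_erase _ (fun k => v k - if m = k then 1 else 0) (Finset.mem_univ m),
        if_pos rfl]
      congr 1
      apply Finset.sum_congr rfl
      intro x hx
      rw [if_neg (fun h => (Finset.mem_erase.mp hx).1 h.symm), Nat.sub_zero]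
    have hstep5 : ∑ k, v k = v m + ∑ k ∈ Finset.univ.erase m, v k :=
      (Finset.add_sum_erase _ v (Finset.mem_univ m)).symm
    rw [hstep1, hstep2, hstep3, hstep4]
    rw [hsum_fin] at hwt
    have := le_trans hwt (Finset.sum_le_sum fun k _ => hwle k)
    omega
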